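/- Let m = 3 and a, b ∈ (0,1], with coefficients a_{12} = a_{21} = a and a_{13} = a_{31} = a_{23} = a_{32} = b, and let c = (α, β, γ) ∈ S^2 (so α + β + γ = 1). Then the matrix B_c, namely the 3×3 matrix with rows (1 − aβ − bγ, aα, bα), (aβ, 1 − aα − bγ, bβ), (bγ, bγ, 1 − bα − bβ), has characteristic polynomial whose roots (eigenvalues) are λ_1 = 1, λ_2 = 1 − b, and λ_3 = 1 − a + (a − b)γ. -/

import Mathlib

open Matrix Polynomial

/-- In the `m = 3` example, the matrix `B_c` has eigenvalues `1`, `1 - b` and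
`1 - a + (a - b)γ`: its characteristic polynomial factors accordingly. -/
theorem stmt_9 (a b : ℝ) (ha : a ∈ Set.Ioc (0 : ℝ) 1) (hb : b ∈ Set.Ioc (0 : ℝ) 1)
    (α β γ : ℝ) (hα : 0 ≤ α) (hβ : 0 ≤ β) (hγ : 0 ≤ γ) (hsum : α + β + γ = 1) :
    (Matrix.of
      !![1 - a * β - b * γ, a * α, b * α;
         a * β, 1 - a * α - b * γ, b * β;
         b * γ, b * γ, 1 - b * α - b * β]).charpoly =
      (X - C 1) * (X - C (1 - b)) * (X - C (1 - a + (a - b) * γ)) := by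
  have hγ' : γ = 1 - α - β := by linarith
  subst hγ'
  rw [show ∀ M : Matrix (Fin 3) (Fin 3) ℝ, Matrix.of M = M from fun _ => rfl]
  rw [Matrix.charpoly, Matrix.det_fin_three]
  simp [charmatrix_apply, Matrix.one_apply]
  ring
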